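/- Let T be an orthogonal triple system over a field k of characteristic ≠ 2 with dim_k T ≥ 2. Then every derivation d of T is skew with respect to the bilinear form: (d(x)|y) + (x|d(y)) = 0 for all x,y ∈ T; that is, der T is contained in the orthogonal Lie algebra so(T,(·|·)). -/
import Mathlib


/-- If `T` is an orthogonal triple system over a field of characteristic ≠ 2
with `dim_k T ≥ 2`, then every derivation of `T` is skew with respect to the bilinear form,
i.e. `der T ⊆ so(T,(·|·))`. -/
theorem stmt_5 {k T : Type*} [Field k] [AddCommGroup T] [Module k T]
    (hchar : (2 : k) ≠ 0) (hdim : 2 ≤ Module.rank k T)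
    (B : T →ₗ[k] T →ₗ[k] k) (P : T →ₗ[k] T →ₗ[k] T →ₗ[k] T)
    (hBsymm : ∀ x y, B x y = B y x) (hBne : B ≠ 0)
    (hPa : ∀ x y, P x x y = 0)
    (hPb : ∀ x y, P x y y = B x y • y - B y y • x)
    (hPc : ∀ x y u v w, P x y (P u v w) =
      P (P x y u) v w + P u (P x y v) w + P u v (P x y w))
    (hPd : ∀ x y u v, B (P x y u) v + B u (P x y v) = 0) :
    ∀ d : Module.End k T,
      (∀ x y z, d (P x y z) = P (d x) y z + P x (d y) z + P x y (d z)) →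
      ∀ x y, B (d x) y + B x (d y) = 0 := by
  intro d hd
  -- Linearization of (b):
  have lin : ∀ x y z : T, P x y z + P x z y
      = B x y • z + B x z • y - (B y z + B z y) • x := by
    intro x y z
    have h := hPb x (y + z)
    simp only [map_add, LinearMap.add_apply] at h
    linear_combination (norm := module) h - hPb x y - hPb x z
  -- Key identity: (B (d x) y + B x (d y)) • y = (B (d y) y + B y (d y)) • x
  have key : ∀ x y : T, (B (d x) y + B x (d y)) • y = (B (d y) y + B y (d y)) • x := by
    intro x y
    have h := hd x y y
    rw [hPb x y, hPb (d x) y, map_sub, map_smul, map_smul] at h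
    linear_combination (norm := module) - h - lin x (d y) y
  intro x y
  by_cases hy : y = 0
  · simp [hy]
  -- find z outside the span of y
  have hz : ∃ z : T, z ∉ Submodule.span k {y} := by
    by_contra hcon
    push_neg at hcon
    have h1 : Module.rank k T ≤ 1 := by
      rw [rank_le_one_iff]
      exact ⟨y, fun v => (Submodule.mem_span_singleton.mp (hcon v))⟩
    have := le_trans hdim h1
    norm_num at this
  obtain ⟨z, hzs⟩ := hz
  -- the diagonal vanishes
  have hdiag : B (d y) y + B y (d y) = 0 := by
    by_contra hne
    apply hzs
    have h := key z y
    have : z = (B (d y) y + B y (d y))⁻¹ • ((B (d z) y + B z (d y)) • y) := by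
      rw [h, smul_smul, inv_mul_cancel₀ hne, one_smul]
    rw [this]
    exact Submodule.smul_mem _ _ (Submodule.smul_mem _ _ (Submodule.mem_span_singleton_self y))
  by_cases hx : x ∈ Submodule.span k {y}
  · obtain ⟨c, rfl⟩ := Submodule.mem_span_singleton.mp hx
    have : B (d (c • y)) y + B (c • y) (d y) = c * (B (d y) y + B y (d y)) := by
      simp [map_smul, mul_add]
    rw [this, hdiag, mul_zero]
  · have h := key x y
    rw [hdiag, zero_smul, smul_eq_zero] at h
    rcases h with h | h
    · exact h
    · exact absurd h hy
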